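/- Let H be a normed space over ℂ, n ≥ 1, x₁,…,xₙ ∈ H, α₁,…,αₙ ∈ ℂ, p a probability vector, a ∈ H, r ≥ 0. If ‖xᵢ − a‖ ≤ r for all i, then ‖∑ᵢ pᵢ αᵢ xᵢ − (∑ᵢ pᵢ αᵢ)(∑ᵢ pᵢ xᵢ)‖ ≤ r · ∑ᵢ pᵢ |αᵢ − ∑ⱼ pⱼ αⱼ|. -/

import Mathlib

theorem gruss_scalar_bound_abs {H : Type*} [NormedAddCommGroup H] [NormedSpace ℂ H]
    (n : ℕ) (hn : 1 ≤ n) (x : Fin n → H) (α : Fin n → ℂ) (p : Fin n → ℝ)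
    (hp : ∀ i, 0 ≤ p i) (hsum : ∑ i, p i = 1) (a : H) (r : ℝ) (hr : 0 ≤ r)
    (hx : ∀ i, ‖x i - a‖ ≤ r) :
    ‖∑ i, (p i : ℂ) • α i • x i - (∑ i, (p i : ℂ) * α i) • ∑ i, (p i : ℂ) • x i‖
      ≤ r * ∑ i, p i * ‖α i - ∑ j, (p j : ℂ) * α j‖ := by
  set β : ℂ := ∑ j, (p j : ℂ) * α j with hβ
  have hsumC : ∑ i, (p i : ℂ) = 1 := by exact_mod_cast hsum
  have h0 : ∑ i, (p i : ℂ) * (α i - β) = 0 := by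
    simp only [mul_sub, Finset.sum_sub_distrib, ← Finset.sum_mul, hsumC, one_mul, ← hβ,
      sub_self]
  have key : ∑ i, (p i : ℂ) • α i • x i - β • ∑ i, (p i : ℂ) • x i
      = ∑ i, ((p i : ℂ) * (α i - β)) • (x i - a) := by
    have : (∑ i, ((p i : ℂ) * (α i - β)) • (x i - a))
        = ∑ i, (((p i : ℂ) * (α i - β)) • x i) - (∑ i, (p i : ℂ) * (α i - β)) • a := by
      simp [smul_sub, Finset.sum_sub_distrib, Finset.sum_smul]
    rw [this, h0, zero_smul, sub_zero, Finset.smul_sum, ← Finset.sum_sub_distrib]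
    refine Finset.sum_congr rfl fun i _ => ?_
    rw [mul_sub, sub_smul, mul_smul, mul_smul]
    rw [smul_comm β (p i : ℂ)]
  rw [key]
  calc ‖∑ i, ((p i : ℂ) * (α i - β)) • (x i - a)‖
      ≤ ∑ i, ‖((p i : ℂ) * (α i - β)) • (x i - a)‖ := norm_sum_le _ _
    _ ≤ ∑ i, p i * ‖α i - β‖ * r := by
        refine Finset.sum_le_sum fun i _ => ?_
        rw [norm_smul, norm_mul, Complex.norm_real, Real.norm_of_nonneg (hp i)]
        exact mul_le_mul_of_nonneg_left (hx i)
          (mul_nonneg (hp i) (norm_nonneg _))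
    _ = r * ∑ i, p i * ‖α i - β‖ := by
        rw [Finset.mul_sum]; exact Finset.sum_congr rfl fun i _ => by ring
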